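/- For every integer ℓ ≥ 5, β₃(ℓ) ≥ 1 - 1/(2ℓ), while for ℓ = 2, 3, 4, β₃(ℓ) ≤ 1 - 1/(2ℓ). -/
import Mathlib


/-- The digamma function `ψ(x) = Γ'(x)/Γ(x)`. -/
noncomputable def digamma (x : ℝ) : ℝ := deriv Real.Gamma x / Real.Gamma x

/-- `g₂(x) = 3/2 - γ - ψ(x+1) - 2x(ψ(2x) - ψ(x))`. -/
noncomputable def g2 (x : ℝ) : ℝ :=
  3 / 2 - Real.eulerMascheroniConstant - digamma (x + 1)
    - 2 * x * (digamma (2 * x) - digamma x)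

/-- `g₃(x) = 2 - γ - ψ(x+1) + (x/2)(5-3x)ψ(x) - x(1-6x)ψ(2x) - (3x/2)(1+3x)ψ(3x)`. -/
noncomputable def g3 (x : ℝ) : ℝ :=
  2 - Real.eulerMascheroniConstant - digamma (x + 1)
    + x / 2 * (5 - 3 * x) * digamma x
    - x * (1 - 6 * x) * digamma (2 * x)
    - 3 * x / 2 * (1 + 3 * x) * digamma (3 * x)

/-- `β₁(ℓ) = (1/ℓ)(-γ - ψ(1/ℓ))`. -/
noncomputable def beta1 (l : ℝ) : ℝ :=
  1 / l * (-Real.eulerMascheroniConstant - digamma (1 / l))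

/-- `β₂(ℓ) = (1/ℓ)[1 - γ - (1 - 2/ℓ)ψ(1/ℓ) - (2/ℓ)ψ(2/ℓ)]`. -/
noncomputable def beta2 (l : ℝ) : ℝ :=
  1 / l * (1 - Real.eulerMascheroniConstant - (1 - 2 / l) * digamma (1 / l)
    - 2 / l * digamma (2 / l))

/-- `β₃(ℓ) = (1/ℓ)[3/2 - γ - (1 - 3/(2ℓ))(1 - 1/ℓ)ψ(1/ℓ) - (1/ℓ)(1 - 6/ℓ)ψ(2/ℓ)
  - (3/(2ℓ))(1 + 3/ℓ)ψ(3/ℓ)]`. -/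
noncomputable def beta3 (l : ℝ) : ℝ :=
  1 / l * (3 / 2 - Real.eulerMascheroniConstant
    - (1 - 3 / (2 * l)) * (1 - 1 / l) * digamma (1 / l)
    - 1 / l * (1 - 6 / l) * digamma (2 / l)
    - 3 / (2 * l) * (1 + 3 / l) * digamma (3 / l))


open Real Set Nat

local notation "γ" => Real.eulerMascheroniConstant

lemma diffGamma {x : ℝ} (hx : 0 < x) : DifferentiableAt ℝ Real.Gamma x :=
  Real.differentiableAt_Gamma fun m ↦ ((neg_nonpos.mpr m.cast_nonneg).trans_lt hx).ne'

lemma diffLogGamma {x : ℝ} (hx : 0 < x) : DifferentiableAt ℝ (Real.log ∘ Real.Gamma) x :=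
  (diffGamma hx).log (Real.Gamma_pos_of_pos hx).ne'

lemma digamma_eq {x : ℝ} (hx : 0 < x) : digamma x = deriv (Real.log ∘ Real.Gamma) x := by
  rw [Function.comp_def, deriv.log (diffGamma hx) (Real.Gamma_pos_of_pos hx).ne', digamma]

lemma digamma_mono {x y : ℝ} (hx : 0 < x) (hxy : x ≤ y) : digamma x ≤ digamma y := by
  have hy : 0 < y := lt_of_lt_of_le hx hxy
  rw [digamma_eq hx, digamma_eq hy]
  exact Real.convexOn_log_Gamma.monotoneOn_deriv
    (fun z hz => diffLogGamma hz) (mem_Ioi.mpr hx) (mem_Ioi.mpr hy) hxy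

lemma digamma_add_one {x : ℝ} (hx : 0 < x) : digamma (x + 1) = digamma x + 1 / x := by
  rw [digamma_eq (by linarith : (0:ℝ) < x + 1), digamma_eq hx]
  rw [← deriv_comp_add_const, one_div, ← Real.deriv_log,
    ← deriv_add (diffLogGamma hx) (Real.differentiableAt_log hx.ne')]
  apply Filter.EventuallyEq.deriv_eq
  filter_upwards [eventually_gt_nhds hx] with y hy
  simp only [Function.comp_apply, Real.Gamma_add_one hy.ne',
    Real.log_mul hy.ne' (Real.Gamma_pos_of_pos hy).ne', add_comm, Pi.add_apply]

lemma digamma_nat (n : ℕ) : digamma (n + 1) = -γ + harmonic n := by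
  have h : (n ! : ℝ) ≠ 0 := by positivity
  rw [digamma, Real.deriv_Gamma_nat, Real.Gamma_nat_eq_factorial,
    mul_div_assoc]
  field_simp

lemma digamma_one : digamma 1 = -γ := by
  have := digamma_nat 0
  norm_num at this
  exact this

lemma digamma_add_nat {t : ℝ} (ht : 0 < t) (n : ℕ) :
    digamma (t + n) = digamma t + ∑ j ∈ Finset.range n, 1 / (t + j) := by
  induction n with
  | zero => simp
  | succ n ih =>
    have h1 : (0:ℝ) < t + n := by positivity
    have h2 : t + ((n:ℕ)+1 : ℕ) = (t + n) + 1 := by push_cast; ring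
    rw [h2, digamma_add_one h1, ih, Finset.sum_range_succ]
    ring

lemma digamma_squeeze {t : ℝ} (h0 : 0 < t) (h1 : t ≤ 1) (n : ℕ) :
    -γ + harmonic n - ∑ j ∈ Finset.range n, 1 / (1 + t + j) ≤ digamma (1 + t) ∧
    digamma (1 + t) ≤ -γ + harmonic (n + 1) - ∑ j ∈ Finset.range n, 1 / (1 + t + j) := by
  have key := digamma_add_nat (show (0:ℝ) < 1 + t by linarith) n
  have hlo : digamma ((n:ℝ) + 1) ≤ digamma (1 + t + n) :=
    digamma_mono (by positivity) (by linarith)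
  have hhi : digamma (1 + t + n) ≤ digamma (((n:ℕ)+1 : ℕ) + 1) :=
    digamma_mono (by positivity) (by push_cast; linarith)
  rw [digamma_nat n] at hlo
  rw [digamma_nat (n+1)] at hhi
  constructor <;> linarith

lemma digamma_lin {t : ℝ} (h0 : 0 < t) (h1 : t ≤ 1) :
    digamma (1 + t) + γ ≤ 1 / 21 + 8 / 5 * t := by
  have up := (digamma_squeeze h0 h1 20).2
  have hterm : ∀ j ∈ Finset.range 20, (1:ℝ)/(j+1) - t * (1/((j:ℝ)+1)^2) ≤ 1 / (1 + t + j) := by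
    intro j _
    have hj : (0:ℝ) < (j:ℝ) + 1 := by positivity
    have hjt : (0:ℝ) < 1 + t + j := by positivity
    rw [← sub_nonneg]
    have e : 1/(1 + t + (j:ℝ)) - ((1:ℝ)/(j+1) - t * (1/((j:ℝ)+1)^2))
        = t^2 / (((j:ℝ)+1)^2 * (1 + t + j)) := by
      field_simp
      ring
    rw [e]; positivity
  have hs := Finset.sum_le_sum hterm
  simp only [Finset.sum_range_succ, Finset.sum_range_zero] at hs up
  norm_num [harmonic, Finset.sum_range_succ] at hs up
  linarith

lemma beta3_eq (l : ℝ) (hl : 0 < l) :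
    beta3 l = 1 - 1/(2*l) + 1/l * (1/2 -
      ((1 - 3/2*(1/l)) * (1 - 1/l) * (digamma (1 + 1/l) + γ)
       + 1/l * (1 - 6*(1/l)) * (digamma (1 + 2/l) + γ)
       + 3/2 * (1/l) * (1 + 3*(1/l)) * (digamma (1 + 3/l) + γ))) := by
  have h1 := digamma_add_one (show (0:ℝ) < 1/l by positivity)
  have h2 := digamma_add_one (show (0:ℝ) < 2/l by positivity)
  have h3 := digamma_add_one (show (0:ℝ) < 3/l by positivity)
  rw [one_div_one_div] at h1
  rw [one_div_div] at h2 h3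
  have e1 : digamma (1/l) = digamma (1 + 1/l) - l := by
    rw [show 1 + 1/l = 1/l + 1 by ring, h1]; ring
  have e2 : digamma (2/l) = digamma (1 + 2/l) - l/2 := by
    rw [show 1 + 2/l = 2/l + 1 by ring, h2]; ring
  have e3 : digamma (3/l) = digamma (1 + 3/l) - l/3 := by
    rw [show 1 + 3/l = 3/l + 1 by ring, h3]; ring
  rw [beta3, e1, e2, e3]
  field_simp
  ring

lemma key_poly {x A B C : ℝ} (hx0 : 0 < x) (hx7 : x ≤ 1/7)
    (hA0 : 0 ≤ A) (hA : A ≤ 1/21 + 8/5*x)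
    (hB0 : 0 ≤ B) (hB : B ≤ 1/21 + 16/5*x)
    (hC0 : 0 ≤ C) (hC : C ≤ 1/21 + 24/5*x) :
    (1 - 3/2*x) * (1 - x) * A + x * (1 - 6*x) * B + 3/2 * x * (1 + 3*x) * C ≤ 1/2 := by
  have ha : (0:ℝ) ≤ (1 - 3/2*x) * (1 - x) := by nlinarith
  have hb : (0:ℝ) ≤ x * (1 - 6*x) := by nlinarith
  have hc : (0:ℝ) ≤ 3/2 * x * (1 + 3*x) := by positivity
  have h1 : (1 - 3/2*x) * (1 - x) * A ≤ (1 - 3/2*x) * (1 - x) * (1/21 + 8/5*x) :=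
    mul_le_mul_of_nonneg_left hA ha
  have h2 : x * (1 - 6*x) * B ≤ x * (1 - 6*x) * (1/21 + 16/5*x) :=
    mul_le_mul_of_nonneg_left hB hb
  have h3 : 3/2 * x * (1 + 3*x) * C ≤ 3/2 * x * (1 + 3*x) * (1/21 + 24/5*x) :=
    mul_le_mul_of_nonneg_left hC hc
  nlinarith [mul_nonneg hx0.le hx0.le, mul_nonneg (mul_nonneg hx0.le hx0.le) hx0.le,
    mul_nonneg (mul_nonneg hx0.le hx0.le) (sub_nonneg.mpr hx7),
    mul_nonneg hx0.le (sub_nonneg.mpr hx7)]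

lemma beta3_uniform (l : ℝ) (hl : 7 ≤ l) : 1 - 1/(2*l) ≤ beta3 l := by
  have hl0 : (0:ℝ) < l := by linarith
  have hx0 : (0:ℝ) < 1/l := by positivity
  have hx7 : 1/l ≤ 1/7 := by
    rw [div_le_div_iff₀ hl0 (by norm_num)]; linarith
  have ht1 : (0:ℝ) < 1/l := hx0
  have ht2 : (0:ℝ) < 2/l := by positivity
  have ht3 : (0:ℝ) < 3/l := by positivity
  have ht1' : 1/l ≤ 1 := hx7.trans (by norm_num)
  have ht2' : 2/l ≤ 1 := by rw [div_le_one hl0]; linarith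
  have ht3' : 3/l ≤ 1 := by rw [div_le_one hl0]; linarith
  have hA0 : 0 ≤ digamma (1 + 1/l) + γ := by
    have := digamma_mono one_pos (by linarith : (1:ℝ) ≤ 1 + 1/l)
    rw [digamma_one] at this; linarith
  have hB0 : 0 ≤ digamma (1 + 2/l) + γ := by
    have := digamma_mono one_pos (by linarith : (1:ℝ) ≤ 1 + 2/l)
    rw [digamma_one] at this; linarith
  have hC0 : 0 ≤ digamma (1 + 3/l) + γ := by
    have := digamma_mono one_pos (by linarith : (1:ℝ) ≤ 1 + 3/l)
    rw [digamma_one] at this; linarith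
  have hA := digamma_lin ht1 ht1'
  have hB := digamma_lin ht2 ht2'
  have hC := digamma_lin ht3 ht3'
  nth_rewrite 2 [show (2:ℝ)/l = 2*(1/l) by ring] at hB
  nth_rewrite 2 [show (3:ℝ)/l = 3*(1/l) by ring] at hC
  have hB' : digamma (1 + 2/l) + γ ≤ 1/21 + 16/5*(1/l) := by linarith [hB]
  have hC' : digamma (1 + 3/l) + γ ≤ 1/21 + 24/5*(1/l) := by linarith [hC]
  have hkey := key_poly hx0 hx7 hA0 (by linarith) hB0 hB' hC0 hC'
  rw [beta3_eq l hl0]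
  nlinarith [hkey, hx0]

lemma case5 : 1 - 1/(2*(5:ℝ)) ≤ beta3 5 := by
  obtain ⟨s1l, s1u⟩ := digamma_squeeze (show (0:ℝ) < 1/5 by norm_num) (by norm_num) 40
  obtain ⟨s2l, s2u⟩ := digamma_squeeze (show (0:ℝ) < 2/5 by norm_num) (by norm_num) 40
  obtain ⟨s3l, s3u⟩ := digamma_squeeze (show (0:ℝ) < 3/5 by norm_num) (by norm_num) 40
  norm_num [harmonic, Finset.sum_range_succ] at s1l s1u s2l s2u s3l s3u
  rw [beta3_eq 5 (by norm_num)]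
  norm_num
  linarith

lemma case6 : 1 - 1/(2*(6:ℝ)) ≤ beta3 6 := by
  obtain ⟨s1l, s1u⟩ := digamma_squeeze (show (0:ℝ) < 1/6 by norm_num) (by norm_num) 12
  obtain ⟨s2l, s2u⟩ := digamma_squeeze (show (0:ℝ) < 1/3 by norm_num) (by norm_num) 12
  obtain ⟨s3l, s3u⟩ := digamma_squeeze (show (0:ℝ) < 1/2 by norm_num) (by norm_num) 12
  norm_num [harmonic, Finset.sum_range_succ] at s1l s1u s2l s2u s3l s3u
  rw [beta3_eq 6 (by norm_num)]
  norm_num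
  linarith

lemma case4 : beta3 4 ≤ 1 - 1/(2*(4:ℝ)) := by
  obtain ⟨s1l, s1u⟩ := digamma_squeeze (show (0:ℝ) < 1/4 by norm_num) (by norm_num) 12
  obtain ⟨s2l, s2u⟩ := digamma_squeeze (show (0:ℝ) < 1/2 by norm_num) (by norm_num) 12
  obtain ⟨s3l, s3u⟩ := digamma_squeeze (show (0:ℝ) < 3/4 by norm_num) (by norm_num) 12
  norm_num [harmonic, Finset.sum_range_succ] at s1l s1u s2l s2u s3l s3u
  rw [beta3_eq 4 (by norm_num)]
  norm_num
  linarith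

lemma case3 : beta3 3 ≤ 1 - 1/(2*(3:ℝ)) := by
  obtain ⟨s1l, s1u⟩ := digamma_squeeze (show (0:ℝ) < 1/3 by norm_num) (by norm_num) 12
  obtain ⟨s2l, s2u⟩ := digamma_squeeze (show (0:ℝ) < 2/3 by norm_num) (by norm_num) 12
  obtain ⟨s3l, s3u⟩ := digamma_squeeze (show (0:ℝ) < 1 by norm_num) (by norm_num) 12
  norm_num [harmonic, Finset.sum_range_succ] at s1l s1u s2l s2u s3l s3u
  rw [beta3_eq 3 (by norm_num)]
  norm_num
  linarith

lemma case2 : beta3 2 ≤ 1 - 1/(2*(2:ℝ)) := by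
  obtain ⟨s1l, s1u⟩ := digamma_squeeze (show (0:ℝ) < 1/2 by norm_num) (by norm_num) 12
  obtain ⟨s2l, s2u⟩ := digamma_squeeze (show (0:ℝ) < 1 by norm_num) (by norm_num) 12
  have h3 := digamma_add_one (show (0:ℝ) < 3/2 by norm_num)
  norm_num [harmonic, Finset.sum_range_succ] at s1l s1u s2l s2u h3
  rw [beta3_eq 2 (by norm_num)]
  norm_num
  linarith


theorem beta3_vs_alpha3 :
    (∀ ℓ : ℕ, 5 ≤ ℓ → 1 - 1 / (2 * (ℓ : ℝ)) ≤ beta3 (ℓ : ℝ)) ∧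
    beta3 (2 : ℝ) ≤ 1 - 1 / (2 * (2 : ℝ)) ∧
    beta3 (3 : ℝ) ≤ 1 - 1 / (2 * (3 : ℝ)) ∧
    beta3 (4 : ℝ) ≤ 1 - 1 / (2 * (4 : ℝ)) := by
  refine ⟨?_, case2, case3, case4⟩
  intro ℓ hℓ
  by_cases h5 : ℓ = 5
  · subst h5
    have h := case5
    push_cast
    convert h using 2 <;> norm_num
  by_cases h6 : ℓ = 6
  · subst h6
    have h := case6
    push_cast
    convert h using 2 <;> norm_num
  · have h7 : (7:ℝ) ≤ (ℓ:ℝ) := by exact_mod_cast (by omega : 7 ≤ ℓ)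
    exact beta3_uniform _ h7
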